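/- Let m be a natural number and suppose ι is a C^{m,γ}-embedding with constant C. Then the evaluation map E : ℝⁿ × X → ℝ, E(x, f) = f̂(x), is of class C^m (i.e. ContDiff ℝ m E on the product Banach space ℝⁿ × X). -/

import Mathlib

open Filter Asymptotics Metric Set Function Topology

universe u v

section aux

variable {E : Type*} [NormedAddCommGroup E] [NormedSpace ℝ E]
  {F : Type*} [NormedAddCommGroup F] [NormedSpace ℝ F]

lemma norm_sub_iteratedFDeriv_zero (f : E → F) (x y : E) :
    ‖iteratedFDeriv ℝ 0 f x - iteratedFDeriv ℝ 0 f y‖ = ‖f x - f y‖ := by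
  rw [iteratedFDeriv_zero_eq_comp, Function.comp_apply, Function.comp_apply,
    ← LinearIsometryEquiv.map_sub, LinearIsometryEquiv.norm_map]

lemma norm_sub_iteratedFDeriv_succ (f : E → F) (k : ℕ) (x y : E) :
    ‖iteratedFDeriv ℝ (k + 1) f x - iteratedFDeriv ℝ (k + 1) f y‖ =
      ‖iteratedFDeriv ℝ k (fderiv ℝ f) x - iteratedFDeriv ℝ k (fderiv ℝ f) y‖ := by
  rw [iteratedFDeriv_succ_eq_comp_right (x := x), iteratedFDeriv_succ_eq_comp_right (x := y),
    Function.comp_apply, Function.comp_apply, ← LinearIsometryEquiv.map_sub,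
    LinearIsometryEquiv.norm_map]

lemma norm_fderiv_eq_iteratedFDeriv_one (f : E → F) (x : E) :
    ‖fderiv ℝ f x‖ = ‖iteratedFDeriv ℝ 1 f x‖ := by
  rw [← norm_iteratedFDeriv_fderiv (n := 0), norm_iteratedFDeriv_zero]

end aux

section main

variable {X : Type v} [NormedAddCommGroup X] [NormedSpace ℝ X] {n : ℕ}

lemma modulus {γ C : ℝ} (hγ : 0 < γ) {m : ℕ} {F : Type u} [NormedAddCommGroup F]
    [NormedSpace ℝ F] (ι : X →ₗ[ℝ] ((Fin n → ℝ) → F))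
    (h1 : ∀ f, ContDiff ℝ m (ι f))
    (h2 : ∀ f, ∀ i : ℕ, i ≤ m → ∀ x, ‖iteratedFDeriv ℝ i (ι f) x‖ ≤ C * ‖f‖)
    (h3 : ∀ f x y, ‖iteratedFDeriv ℝ m (ι f) x - iteratedFDeriv ℝ m (ι f) y‖ ≤
      C * ‖f‖ * ‖x - y‖ ^ γ)
    (f : X) (x y : Fin n → ℝ) :
    ‖ι f y - ι f x‖ ≤ C * ‖f‖ * (‖y - x‖ ^ γ + ‖y - x‖) := by
  have hCf : (0 : ℝ) ≤ C * ‖f‖ := le_trans (norm_nonneg _) (h2 f 0 (Nat.zero_le _) x)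
  cases m with
  | zero =>
    have h := h3 f y x
    rw [norm_sub_iteratedFDeriv_zero] at h
    have h0 : (0 : ℝ) ≤ ‖y - x‖ := norm_nonneg _
    refine h.trans ?_
    rw [mul_add]
    nlinarith
  | succ k =>
    have hdiff : Differentiable ℝ (ι f) :=
      (h1 f).differentiable (by simp)
    have hb : ∀ z ∈ (univ : Set (Fin n → ℝ)), ‖fderiv ℝ (ι f) z‖ ≤ C * ‖f‖ := by
      intro z _
      rw [norm_fderiv_eq_iteratedFDeriv_one]
      exact h2 f 1 (Nat.succ_le_succ (Nat.zero_le k)) z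
    have h := convex_univ.norm_image_sub_le_of_norm_fderiv_le
      (fun z _ => hdiff.differentiableAt) hb (mem_univ x) (mem_univ y)
    refine h.trans ?_
    rw [mul_add]
    have hrp : (0 : ℝ) ≤ C * ‖f‖ * ‖y - x‖ ^ γ :=
      mul_nonneg hCf (Real.rpow_nonneg (norm_nonneg _) _)
    linarith

/-- The evaluation map as a continuous linear map. -/
noncomputable def evalCLM {F : Type u} [NormedAddCommGroup F] [NormedSpace ℝ F]
    (ι : X →ₗ[ℝ] ((Fin n → ℝ) → F)) (C : ℝ) (h : ∀ g x, ‖ι g x‖ ≤ C * ‖g‖)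
    (x : Fin n → ℝ) : X →L[ℝ] F :=
  LinearMap.mkContinuous
    { toFun := fun g => ι g x
      map_add' := fun a b => by simp
      map_smul' := fun c a => by simp }
    C (fun g => h g x)

theorem key {γ C : ℝ} (hγ : 0 < γ) (hC : 0 ≤ C) :
    ∀ (m : ℕ) {F : Type u} [NormedAddCommGroup F] [NormedSpace ℝ F]
      (ι : X →ₗ[ℝ] ((Fin n → ℝ) → F)),
      (∀ f, ContDiff ℝ m (ι f)) →
      (∀ f, ∀ i : ℕ, i ≤ m → ∀ x, ‖iteratedFDeriv ℝ i (ι f) x‖ ≤ C * ‖f‖) →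
      (∀ f x y, ‖iteratedFDeriv ℝ m (ι f) x - iteratedFDeriv ℝ m (ι f) y‖ ≤
        C * ‖f‖ * ‖x - y‖ ^ γ) →
      ∃ e : (Fin n → ℝ) → (X →L[ℝ] F), (∀ x g, e x g = ι g x) ∧ ContDiff ℝ m e := by
  intro m
  induction m with
  | zero =>
    intro F _ _ ι h1 h2 h3
    have hb : ∀ g x, ‖ι g x‖ ≤ C * ‖g‖ := fun g x => by
      have h := h2 g 0 le_rfl x; rwa [norm_iteratedFDeriv_zero] at h
    refine ⟨evalCLM ι C hb, fun x g => rfl, ?_⟩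
    rw [show ((0 : ℕ) : WithTop ℕ∞) = 0 from rfl, contDiff_zero]
    refine continuous_iff_continuousAt.mpr fun x₀ => ?_
    have hbound : ∀ x, ‖evalCLM ι C hb x - evalCLM ι C hb x₀‖ ≤ C * ‖x - x₀‖ ^ γ := by
      intro x
      refine ContinuousLinearMap.opNorm_le_bound _ (by positivity) fun g => ?_
      have h := h3 g x x₀
      rw [norm_sub_iteratedFDeriv_zero] at h
      calc ‖(evalCLM ι C hb x - evalCLM ι C hb x₀) g‖ = ‖ι g x - ι g x₀‖ := rfl
        _ ≤ C * ‖g‖ * ‖x - x₀‖ ^ γ := h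
        _ = C * ‖x - x₀‖ ^ γ * ‖g‖ := by ring
    have ht : Tendsto (fun x => C * ‖x - x₀‖ ^ γ) (𝓝 x₀) (𝓝 0) := by
      have h0 : Tendsto (fun x : Fin n → ℝ => ‖x - x₀‖) (𝓝 x₀) (𝓝 0) :=
        tendsto_iff_norm_sub_tendsto_zero.mp tendsto_id
      have h1' : Tendsto (fun t : ℝ => C * t ^ γ) (𝓝 0) (𝓝 0) := by
        have h := (Real.continuousAt_rpow_const 0 γ (Or.inr hγ.le)).tendsto
        rw [Real.zero_rpow hγ.ne'] at h
        simpa using h.const_mul C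
      exact h1'.comp h0
    exact tendsto_iff_norm_sub_tendsto_zero.mpr
      (squeeze_zero (fun _ => norm_nonneg _) hbound ht)
  | succ m IH =>
    intro F _ _ ι h1 h2 h3
    have h1' : ∀ f, ContDiff ℝ ((m : WithTop ℕ∞) + 1) (ι f) := fun f => by
      have h := h1 f; exact_mod_cast h
    have hdiff : ∀ f, Differentiable ℝ (ι f) := fun f =>
      (contDiff_succ_iff_fderiv.mp (h1' f)).1
    have hDadd : ∀ f g : X,
        fderiv ℝ (ι (f + g)) = fun z => fderiv ℝ (ι f) z + fderiv ℝ (ι g) z := by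
      intro f g
      funext z
      have h : ι (f + g) = fun y => ι f y + ι g y := by rw [map_add]; rfl
      rw [h]
      exact fderiv_add ((hdiff f).differentiableAt) ((hdiff g).differentiableAt)
    have hDsmul : ∀ (c : ℝ) (f : X),
        fderiv ℝ (ι (c • f)) = fun z => c • fderiv ℝ (ι f) z := by
      intro c f
      funext z
      have h : ι (c • f) = fun y => c • ι f y := by rw [map_smul]; rfl
      rw [h]
      exact fderiv_const_smul ((hdiff f).differentiableAt) c
    set D : X →ₗ[ℝ] ((Fin n → ℝ) → ((Fin n → ℝ) →L[ℝ] F)) :=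
      { toFun := fun f => fderiv ℝ (ι f)
        map_add' := fun f g => hDadd f g
        map_smul' := fun c f => hDsmul c f } with hDdef
    have hD1 : ∀ f, ContDiff ℝ m (D f) := fun f =>
      (contDiff_succ_iff_fderiv.mp (h1' f)).2.2
    have hD2 : ∀ f, ∀ i : ℕ, i ≤ m → ∀ x, ‖iteratedFDeriv ℝ i (D f) x‖ ≤ C * ‖f‖ := by
      intro f i hi x
      show ‖iteratedFDeriv ℝ i (fderiv ℝ (ι f)) x‖ ≤ C * ‖f‖
      rw [norm_iteratedFDeriv_fderiv]
      exact h2 f (i + 1) (Nat.succ_le_succ hi) x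
    have hD3 : ∀ f x y, ‖iteratedFDeriv ℝ m (D f) x - iteratedFDeriv ℝ m (D f) y‖ ≤
        C * ‖f‖ * ‖x - y‖ ^ γ := by
      intro f x y
      have h := h3 f x y
      rw [norm_sub_iteratedFDeriv_succ] at h
      exact h
    obtain ⟨eD, heD, heDc⟩ := IH D hD1 hD2 hD3
    have htay : ∀ g x y, ‖ι g y - ι g x - fderiv ℝ (ι g) x (y - x)‖ ≤
        C * ‖g‖ * (‖y - x‖ ^ γ + ‖y - x‖) * ‖y - x‖ := by
      intro g x y
      have hCg : (0 : ℝ) ≤ C * ‖g‖ := mul_nonneg hC (norm_nonneg _)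
      set L := fderiv ℝ (ι g) x with hL
      have hGdiff : ∀ z ∈ closedBall x ‖y - x‖,
          DifferentiableAt ℝ (fun w => ι g w - L w) z :=
        fun z _ => ((hdiff g).differentiableAt).sub L.differentiableAt
      have hGd : ∀ z ∈ closedBall x ‖y - x‖,
          ‖fderiv ℝ (fun w => ι g w - L w) z‖ ≤ C * ‖g‖ * (‖y - x‖ ^ γ + ‖y - x‖) := by
        intro z hz
        rw [fderiv_fun_sub ((hdiff g).differentiableAt) L.differentiableAt, L.fderiv]
        have h' := modulus hγ D hD1 hD2 hD3 g x z
        have hzx : ‖z - x‖ ≤ ‖y - x‖ := by simpa [dist_eq_norm] using hz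
        refine h'.trans ?_
        refine mul_le_mul_of_nonneg_left ?_ hCg
        exact add_le_add (Real.rpow_le_rpow (norm_nonneg _) hzx hγ.le) hzx
      have hkey := (convex_closedBall x ‖y - x‖).norm_image_sub_le_of_norm_fderiv_le
        hGdiff hGd (mem_closedBall_self (norm_nonneg _))
        (mem_closedBall.mpr (le_of_eq (dist_eq_norm y x)))
      have heq : ι g y - L y - (ι g x - L x) = ι g y - ι g x - L (y - x) := by
        rw [map_sub]; abel
      rwa [heq] at hkey
    have hb : ∀ g x, ‖ι g x‖ ≤ C * ‖g‖ := fun g x => by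
      have h := h2 g 0 (Nat.zero_le _) x; rwa [norm_iteratedFDeriv_zero] at h
    set e := evalCLM ι C hb with he
    have hfd : ∀ x, HasFDerivAt e ((eD x).flip) x := by
      intro x
      refine HasFDerivAt.of_isLittleO ?_
      rw [isLittleO_iff]
      intro c hc
      set B : (Fin n → ℝ) → ℝ := fun y => C * (‖y - x‖ ^ γ + ‖y - x‖) with hBdef
      have hBt : Tendsto B (𝓝 x) (𝓝 0) := by
        have h0 : Tendsto (fun y : Fin n → ℝ => ‖y - x‖) (𝓝 x) (𝓝 0) :=
          tendsto_iff_norm_sub_tendsto_zero.mp tendsto_id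
        have h1'' : Tendsto (fun t : ℝ => C * (t ^ γ + t)) (𝓝 0) (𝓝 0) := by
          have hr := (Real.continuousAt_rpow_const 0 γ (Or.inr hγ.le)).tendsto
          rw [Real.zero_rpow hγ.ne'] at hr
          have := (hr.add tendsto_id).const_mul C
          simpa using this
        exact h1''.comp h0
      have hub : ∀ y, ‖e y - e x - (eD x).flip (y - x)‖ ≤ B y * ‖y - x‖ := by
        intro y
        have hBy : (0 : ℝ) ≤ B y := by
          have : (0:ℝ) ≤ ‖y - x‖ ^ γ := Real.rpow_nonneg (norm_nonneg _) _
          have : (0:ℝ) ≤ ‖y - x‖ := norm_nonneg _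
          positivity
        refine ContinuousLinearMap.opNorm_le_bound _
          (mul_nonneg hBy (norm_nonneg _)) fun g => ?_
        have hDg : (eD x) g = fderiv ℝ (ι g) x := heD x g
        have happ : (e y - e x - (eD x).flip (y - x)) g =
            ι g y - ι g x - fderiv ℝ (ι g) x (y - x) := by
          simp [ContinuousLinearMap.sub_apply, ContinuousLinearMap.flip_apply, hDg]
          rfl
        rw [happ]
        calc ‖ι g y - ι g x - fderiv ℝ (ι g) x (y - x)‖
            ≤ C * ‖g‖ * (‖y - x‖ ^ γ + ‖y - x‖) * ‖y - x‖ := htay g x y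
          _ = (B y * ‖y - x‖) * ‖g‖ := by rw [hBdef]; ring
      filter_upwards [hBt.eventually (gt_mem_nhds hc)] with y hBy
      calc ‖e y - e x - (eD x).flip (y - x)‖ ≤ B y * ‖y - x‖ := hub y
        _ ≤ c * ‖y - x‖ := mul_le_mul_of_nonneg_right hBy.le (norm_nonneg _)
    have hdiffe : Differentiable ℝ e := fun x => (hfd x).differentiableAt
    have hfderiv : fderiv ℝ e = fun x => (eD x).flip := funext fun x => (hfd x).fderiv
    have hflip : ContDiff ℝ m (fun x => (eD x).flip) := by
      have h : ContDiff ℝ (m : WithTop ℕ∞)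
          (fun T : X →L[ℝ] ((Fin n → ℝ) →L[ℝ] F) => T.flip) :=
        by
          have h' := LinearIsometryEquiv.contDiff (𝕜 := ℝ) (E := X →L[ℝ] ((Fin n → ℝ) →L[ℝ] F))
            (F := (Fin n → ℝ) →L[ℝ] X →L[ℝ] F) (n := (m : WithTop ℕ∞))
            (ContinuousLinearMap.flipₗᵢ ℝ X (Fin n → ℝ) F)
          exact h'
      exact h.comp heDc
    refine ⟨e, fun x g => rfl, ?_⟩
    rw [show (((m + 1 : ℕ)) : WithTop ℕ∞) = (m : WithTop ℕ∞) + 1 by push_cast; rfl]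
    refine contDiff_succ_iff_fderiv.mpr ⟨hdiffe, ?_, ?_⟩
    · intro h; simp at h
    · rw [hfderiv]; exact hflip

end main

/-- `ι : X →ₗ[ℝ] ((Fin n → ℝ) → ℝ)` is a `C^{m,γ}`-embedding with constant `C`:
for every `f : X` the function `f̂ = ι f` is `m`-times continuously differentiable,
all iterated derivatives up to order `m` are bounded by `C‖f‖`, and the `m`-th
iterated derivative is `γ`-Hölder with constant `C‖f‖`. -/
def IsCmGammaEmbedding {X : Type*} [NormedAddCommGroup X] [NormedSpace ℝ X]
    (n : ℕ) (ι : X →ₗ[ℝ] ((Fin n → ℝ) → ℝ)) (m : ℕ) (γ C : ℝ) : Prop :=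
  ∀ f : X,
    ContDiff ℝ m (ι f) ∧
    (∀ i : ℕ, i ≤ m → ∀ x : Fin n → ℝ, ‖iteratedFDeriv ℝ i (ι f) x‖ ≤ C * ‖f‖) ∧
    ∀ x y : Fin n → ℝ,
      ‖iteratedFDeriv ℝ m (ι f) x - iteratedFDeriv ℝ m (ι f) y‖ ≤ C * ‖f‖ * ‖x - y‖ ^ γ

/-- If `ι` is a `C^{m,γ}`-embedding with constant `C`, then the evaluation map
`E : ℝⁿ × X → ℝ`, `E(x, f) = f̂(x)`, is of class `C^m`. -/
theorem eval_contDiff {X : Type*} [NormedAddCommGroup X] [NormedSpace ℝ X] [CompleteSpace X]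
    {n : ℕ} (hn : 0 < n) {γ C : ℝ} (hγ : 0 < γ) (hγ1 : γ < 1) (hC : 0 ≤ C)
    (ι : X →ₗ[ℝ] ((Fin n → ℝ) → ℝ)) (m : ℕ)
    (hemb : IsCmGammaEmbedding n ι m γ C) :
    ContDiff ℝ m (fun p : (Fin n → ℝ) × X => ι p.2 p.1) := by
  obtain ⟨e, he, hec⟩ := key hγ hC m ι (fun f => (hemb f).1)
    (fun f => (hemb f).2.1) (fun f => (hemb f).2.2)
  have hrw : (fun p : (Fin n → ℝ) × X => ι p.2 p.1) =
      (fun q : (X →L[ℝ] ℝ) × X => q.1 q.2) ∘ (fun p : (Fin n → ℝ) × X => (e p.1, p.2)) := by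
    funext p
    simp [Function.comp, he]
  rw [hrw]
  exact (isBoundedBilinearMap_apply.contDiff).comp ((hec.comp contDiff_fst).prodMk contDiff_snd)
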